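/- In Pic(S_7) ≅ ℤ^8, the anticanonical class -K is the unique class expressible as D_1 + D_2 with D_1, D_2 (-1)-classes satisfying D_1·D_2 = 2; i.e., -K is the unique (2)-ruling of S_7. Moreover, -K is expressible in exactly 28 ways as an unordered sum of two (-1)-classes, namely e_i + (3e_0 - Σ e_k - e_i) and (e_0 - e_i - e_j) + (2e_0 - Σ e_k + e_i + e_j). -/

import Mathlib

open Finset

/-- Intersection form on Pic = ℤ^8 with matrix diag(1,-1,...,-1). -/
def dot (x y : Fin 8 → ℤ) : ℤ := x 0 * y 0 - ∑ i : Fin 7, x i.succ * y i.succ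

/-- The canonical class K = (-3,1,...,1). -/
def K : Fin 8 → ℤ := fun i => if i = 0 then -3 else 1

/-- A (-1)-class: D·D = -1 and D·K = -1. -/
def isNegClass (D : Fin 8 → ℤ) : Prop := dot D D = -1 ∧ dot D K = -1

/-! ### Auxiliary lemmas -/

instance (D : Fin 8 → ℤ) : Decidable (isNegClass D) := by unfold isNegClass; infer_instance

lemma dot_comm' (x y : Fin 8 → ℤ) : dot x y = dot y x := by
  simp [dot, mul_comm]

lemma dot_add_left' (x y z : Fin 8 → ℤ) : dot (x + y) z = dot x z + dot y z := by
  simp [dot, add_mul, Finset.sum_add_distrib]; ring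

lemma dot_add_right' (x y z : Fin 8 → ℤ) : dot x (y + z) = dot x y + dot x z := by
  rw [dot_comm', dot_add_left', dot_comm' y x, dot_comm' z x]

lemma dot_K_K' : dot K K = 2 := by decide

lemma dot_self_K' (v : Fin 8 → ℤ) : dot v K = -3 * v 0 - ∑ i : Fin 7, v i.succ := by
  simp [dot, K, Fin.succ_ne_zero]; ring

lemma dot_self' (v : Fin 8 → ℤ) : dot v v = v 0 ^ 2 - ∑ i : Fin 7, (v i.succ) ^ 2 := by
  simp [dot, sq]

/-- Negative definiteness of `K⊥` (the `E₇`-lattice). -/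
lemma defin' (v : Fin 8 → ℤ) (hK : dot v K = 0) (hv : dot v v = 0) : v = 0 := by
  rw [dot_self_K'] at hK
  have hs : ∑ i : Fin 7, v i.succ = -3 * v 0 := by linarith
  have hq : ∑ i : Fin 7, (v i.succ) ^ 2 = v 0 ^ 2 := by
    rw [dot_self'] at hv; linarith
  have hC := sq_sum_le_card_mul_sum_sq (s := (univ : Finset (Fin 7))) (f := fun i => v i.succ)
  rw [hs, hq] at hC
  simp at hC
  have h0 : v 0 = 0 := by nlinarith [sq_nonneg (v 0)]
  have hq0 : ∑ i : Fin 7, (v i.succ) ^ 2 = 0 := by rw [hq, h0]; ring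
  have hall : ∀ i ∈ (univ : Finset (Fin 7)), (v i.succ) ^ 2 = 0 :=
    (Finset.sum_eq_zero_iff_of_nonneg (fun i _ => sq_nonneg _)).1 hq0
  funext m
  refine Fin.cases ?_ ?_ m
  · exact h0
  · intro j
    have := sq_eq_zero_iff.1 (hall j (mem_univ j))
    simpa using this

lemma ruling_unique' (D1 D2 : Fin 8 → ℤ) (h1 : isNegClass D1) (h2 : isNegClass D2)
    (h12 : dot D1 D2 = 2) : D1 + D2 = -K := by
  have hvK : dot (D1 + D2 + K) K = 0 := by
    rw [dot_add_left', dot_add_left', h1.2, h2.2, dot_K_K']; ring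
  have hvv : dot (D1 + D2 + K) (D1 + D2 + K) = 0 := by
    simp only [dot_add_left', dot_add_right', dot_comm' D2 D1, dot_comm' K D1,
      dot_comm' K D2, h1.1, h2.1, h1.2, h2.2, dot_K_K', h12]
    norm_num
  have h0 := defin' _ hvK hvv
  exact eq_neg_of_add_eq_zero_left h0

lemma negK_eq' : -K = fun m : Fin 8 => if m = 0 then (3:ℤ) else -1 := by
  funext m; by_cases h : m = 0 <;> simp [K, h]

/-- Bound on the degree coordinate of a (-1)-class. -/
lemma d0_range' (a : Fin 8 → ℤ) (ha : isNegClass a) : 0 ≤ a 0 ∧ a 0 ≤ 3 := by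
  obtain ⟨h1, h2⟩ := ha
  rw [dot_self'] at h1; rw [dot_self_K'] at h2
  have hs : ∑ i : Fin 7, a i.succ = 1 - 3 * a 0 := by linarith
  have hq : ∑ i : Fin 7, (a i.succ) ^ 2 = a 0 ^ 2 + 1 := by linarith
  have hC := sq_sum_le_card_mul_sum_sq (s := (univ : Finset (Fin 7))) (f := fun i => a i.succ)
  rw [hs, hq] at hC
  simp at hC
  constructor
  · nlinarith [sq_nonneg (a 0 + 1), sq_nonneg (a 0)]
  · nlinarith [sq_nonneg (a 0 - 4), sq_nonneg (a 0)]

lemma classify0' (a : Fin 8 → ℤ) (ha : isNegClass a) (h0 : a 0 = 0) :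
    ∃ i : Fin 7, a = Pi.single i.succ 1 := by
  obtain ⟨h1, h2⟩ := ha
  rw [dot_self'] at h1; rw [dot_self_K'] at h2
  rw [h0] at h1 h2
  have hq : ∑ i : Fin 7, (a i.succ) ^ 2 = 1 := by linarith
  have hs : ∑ i : Fin 7, a i.succ = 1 := by linarith
  have hex : ∃ i : Fin 7, a i.succ ≠ 0 := by
    by_contra h; push_neg at h
    simp [h] at hq
  obtain ⟨i, hi⟩ := hex
  have h1i : 1 ≤ (a i.succ) ^ 2 := by
    rcases hi.lt_or_gt with h | h <;> nlinarith
  have hrest : (a i.succ) ^ 2 + ∑ j ∈ univ.erase i, (a j.succ) ^ 2 = 1 := by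
    rw [Finset.add_sum_erase univ (fun j : Fin 7 => (a j.succ) ^ 2) (mem_univ i)]
    exact hq
  have hrest0 : ∀ j ∈ univ.erase i, (a j.succ) ^ 2 = 0 := by
    apply (Finset.sum_eq_zero_iff_of_nonneg (fun j _ => sq_nonneg _)).1
    have hnn : (0:ℤ) ≤ ∑ j ∈ univ.erase i, (a j.succ) ^ 2 :=
      Finset.sum_nonneg (fun j _ => sq_nonneg _)
    omega
  have hz : ∀ j : Fin 7, j ≠ i → a j.succ = 0 := fun j hj =>
    sq_eq_zero_iff.1 (hrest0 j (mem_erase.2 ⟨hj, mem_univ j⟩))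
  have hai : a i.succ = 1 := by
    have h5 : a i.succ + ∑ j ∈ univ.erase i, a j.succ = 1 := by
      rw [Finset.add_sum_erase univ (fun j : Fin 7 => a j.succ) (mem_univ i)]
      exact hs
    rw [Finset.sum_eq_zero (fun j hj => hz j (mem_erase.1 hj).1)] at h5
    omega
  refine ⟨i, funext fun m => ?_⟩
  refine Fin.cases ?_ ?_ m
  · rw [h0, Pi.single_apply, if_neg (Fin.succ_ne_zero i).symm]
  · intro j
    rw [Pi.single_apply]
    by_cases hji : j = i
    · subst hji; simp [hai]
    · rw [if_neg (by simpa [Fin.succ_inj] using hji), hz j hji]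

lemma classify1' (a : Fin 8 → ℤ) (ha : isNegClass a) (h0 : a 0 = 1) :
    ∃ i j : Fin 7, i < j ∧
      a = Pi.single (0 : Fin 8) 1 - Pi.single i.succ 1 - Pi.single j.succ 1 := by
  obtain ⟨h1, h2⟩ := ha
  rw [dot_self'] at h1; rw [dot_self_K'] at h2
  rw [h0] at h1 h2
  have hq : ∑ i : Fin 7, (a i.succ) ^ 2 = 2 := by linarith
  have hs : ∑ i : Fin 7, a i.succ = -2 := by linarith
  have hmem : ∀ i : Fin 7, a i.succ = -1 ∨ a i.succ = 0 := by
    have hzero : ∑ i : Fin 7, ((a i.succ) ^ 2 + a i.succ) = 0 := by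
      rw [Finset.sum_add_distrib, hq, hs]; ring
    have hnn : ∀ i : Fin 7, (0:ℤ) ≤ (a i.succ) ^ 2 + a i.succ := by
      intro i; nlinarith [sq_nonneg (a i.succ + 1), sq_nonneg (a i.succ)]
    have hterm := (Finset.sum_eq_zero_iff_of_nonneg (fun i _ => hnn i)).1 hzero
    intro i
    have hi := hterm i (mem_univ i)
    have : a i.succ * (a i.succ + 1) = 0 := by nlinarith
    rcases mul_eq_zero.1 this with h | h
    · right; exact h
    · left; omega
  set T := univ.filter (fun i : Fin 7 => a i.succ = -1) with hT
  have hsum : ∑ i ∈ T, a i.succ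
      + ∑ i ∈ univ.filter (fun i : Fin 7 => ¬ a i.succ = -1), a i.succ = -2 := by
    rw [Finset.sum_filter_add_sum_filter_not]; exact hs
  have h2' : ∑ i ∈ univ.filter (fun i : Fin 7 => ¬ a i.succ = -1), a i.succ = 0 :=
    Finset.sum_eq_zero (fun i hi => by
      rcases hmem i with h | h
      · exact absurd h (mem_filter.1 hi).2
      · exact h)
  have hTsum : ∑ i ∈ T, a i.succ = -(T.card : ℤ) := by
    rw [Finset.sum_congr rfl (fun i hi => (mem_filter.1 hi).2), Finset.sum_const]
    simp
    rfl
  have hcard : T.card = 2 := by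
    rw [hTsum] at hsum; rw [h2'] at hsum; omega
  obtain ⟨i, j, hij, hTeq⟩ := Finset.card_eq_two.1 hcard
  have hvi : a i.succ = -1 := by
    have : i ∈ T := by rw [hTeq]; simp
    exact (mem_filter.1 this).2
  have hvj : a j.succ = -1 := by
    have : j ∈ T := by rw [hTeq]; simp
    exact (mem_filter.1 this).2
  have hvz : ∀ k : Fin 7, k ≠ i → k ≠ j → a k.succ = 0 := by
    intro k hki hkj
    rcases hmem k with h | h
    · exfalso
      have : k ∈ T := mem_filter.2 ⟨mem_univ k, h⟩
      rw [hTeq] at this; simp at this; tauto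
    · exact h
  have main : ∀ i j : Fin 7, i ≠ j → a i.succ = -1 → a j.succ = -1 →
      (∀ k : Fin 7, k ≠ i → k ≠ j → a k.succ = 0) →
      i < j →
      a = Pi.single (0 : Fin 8) 1 - Pi.single i.succ 1 - Pi.single j.succ 1 := by
    intro i j hij hvi hvj hvz hlt
    funext m
    refine Fin.cases ?_ ?_ m
    · simp [h0, Pi.single_apply, (Fin.succ_ne_zero i).symm, (Fin.succ_ne_zero j).symm]
    · intro k
      simp only [Pi.sub_apply, Pi.single_apply]
      rw [if_neg (Fin.succ_ne_zero k)]
      by_cases hki : k = i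
      · subst hki; simp [hvi, (Fin.succ_ne_zero k).symm, Fin.succ_inj, hij]
      · by_cases hkj : k = j
        · subst hkj; simp [hvj, Fin.succ_inj, hki, hij]
        · simp [Fin.succ_inj, hki, hkj, hvz k hki hkj]
  rcases lt_or_gt_of_ne hij with h | h
  · exact ⟨i, j, h, main i j hij hvi hvj hvz h⟩
  · exact ⟨j, i, h, main j i (Ne.symm hij) hvj hvi (fun k h1' h2' => hvz k h2' h1') h⟩

lemma partnerA' (i : Fin 7) :
    -K - Pi.single i.succ 1 = (fun m : Fin 8 => if m = 0 then (3:ℤ) else -1) - Pi.single i.succ 1 := by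
  rw [negK_eq']

lemma partnerB' (i j : Fin 7) :
    -K - (Pi.single (0 : Fin 8) 1 - Pi.single i.succ 1 - Pi.single j.succ 1)
      = (fun m : Fin 8 => if m = 0 then (2:ℤ) else -1) + Pi.single i.succ 1 + Pi.single j.succ 1 := by
  funext m
  by_cases h : m = 0
  · subst h
    simp [K, Pi.single_eq_same, Pi.single_eq_of_ne (Fin.succ_ne_zero i).symm,
      Pi.single_eq_of_ne (Fin.succ_ne_zero j).symm]
  · simp only [Pi.sub_apply, Pi.add_apply, Pi.neg_apply]
    rw [show K m = 1 from if_neg h, if_neg h, Pi.single_eq_of_ne h]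
    ring

/-- The classification of unordered pairs (part 3 of the theorem). -/
lemma part3' (p : Finset (Fin 8 → ℤ)) (hc : p.card = 2) (hneg : ∀ x ∈ p, isNegClass x)
    (hsum : ∑ x ∈ p, x = -K) :
    (∃ i : Fin 7, p = {Pi.single i.succ 1,
      (fun m => if m = 0 then 3 else -1) - Pi.single i.succ 1}) ∨
    (∃ i j : Fin 7, i < j ∧ p =
      {Pi.single (0 : Fin 8) 1 - Pi.single i.succ 1 - Pi.single j.succ 1,
       (fun m => if m = 0 then 2 else -1) + Pi.single i.succ 1 + Pi.single j.succ 1}) := by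
  obtain ⟨a, b, hab, rfl⟩ := Finset.card_eq_two.1 hc
  rw [Finset.sum_pair hab] at hsum
  have ha : isNegClass a := hneg a (by simp)
  have hb : isNegClass b := hneg b (by simp)
  have hbeq : b = -K - a := eq_sub_of_add_eq' hsum
  have haeq : a = -K - b := eq_sub_of_add_eq hsum
  have hsum0 : a 0 + b 0 = 3 := by
    have := congrFun hsum 0
    simp only [Pi.add_apply, Pi.neg_apply, K] at this
    simpa using this
  have hra := d0_range' a ha
  have hrb := d0_range' b hb
  have hcase : a 0 = 0 ∨ a 0 = 1 ∨ b 0 = 0 ∨ b 0 = 1 := by omega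
  rcases hcase with h | h | h | h
  · obtain ⟨i, hi⟩ := classify0' a ha h
    exact Or.inl ⟨i, by rw [hbeq, hi, partnerA']⟩
  · obtain ⟨i, j, hlt, hij⟩ := classify1' a ha h
    exact Or.inr ⟨i, j, hlt, by rw [hbeq, hij, partnerB']⟩
  · obtain ⟨i, hi⟩ := classify0' b hb h
    refine Or.inl ⟨i, ?_⟩
    rw [Finset.pair_comm, haeq, hi, partnerA']
  · obtain ⟨i, j, hlt, hij⟩ := classify1' b hb h
    refine Or.inr ⟨i, j, hlt, ?_⟩
    rw [Finset.pair_comm, haeq, hij, partnerB']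

def pA' (i : Fin 7) : Finset (Fin 8 → ℤ) :=
  {Pi.single i.succ 1, (fun m => if m = 0 then 3 else -1) - Pi.single i.succ 1}

def pB' (i j : Fin 7) : Finset (Fin 8 → ℤ) :=
  {Pi.single (0:Fin 8) 1 - Pi.single i.succ 1 - Pi.single j.succ 1,
   (fun m => if m = 0 then 2 else -1) + Pi.single i.succ 1 + Pi.single j.succ 1}

def FF' : Finset (Finset (Fin 8 → ℤ)) :=
  (univ.image pA') ∪
    ((univ.filter fun ij : Fin 7 × Fin 7 => ij.1 < ij.2).image fun ij => pB' ij.1 ij.2)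

lemma pA_facts' : ∀ i : Fin 7,
    (pA' i).card = 2 ∧ (∀ x ∈ pA' i, isNegClass x) ∧ ∑ x ∈ pA' i, x = -K := by decide

lemma pB_facts' : ∀ i j : Fin 7, i < j →
    (pB' i j).card = 2 ∧ (∀ x ∈ pB' i j, isNegClass x) ∧ ∑ x ∈ pB' i j, x = -K := by decide

lemma FF_card' : FF'.card = 28 := by decide

theorem stmt9 :
    {R : Fin 8 → ℤ | ∃ D1 D2, isNegClass D1 ∧ isNegClass D2 ∧ dot D1 D2 = 2 ∧
      R = D1 + D2} = {-K} ∧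
    {p : Finset (Fin 8 → ℤ) | p.card = 2 ∧ (∀ x ∈ p, isNegClass x) ∧
      ∑ x ∈ p, x = -K}.ncard = 28 ∧
    (∀ p : Finset (Fin 8 → ℤ), p.card = 2 → (∀ x ∈ p, isNegClass x) →
      ∑ x ∈ p, x = -K →
      (∃ i : Fin 7, p = {Pi.single i.succ 1,
        (fun m => if m = 0 then 3 else -1) - Pi.single i.succ 1}) ∨
      (∃ i j : Fin 7, i < j ∧ p =
        {Pi.single (0 : Fin 8) 1 - Pi.single i.succ 1 - Pi.single j.succ 1,
         (fun m => if m = 0 then 2 else -1) + Pi.single i.succ 1 + Pi.single j.succ 1})) := by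
  refine ⟨?_, ?_, part3'⟩
  · ext R
    simp only [Set.mem_setOf_eq, Set.mem_singleton_iff]
    constructor
    · rintro ⟨D1, D2, h1, h2, h12, rfl⟩
      exact ruling_unique' D1 D2 h1 h2 h12
    · rintro rfl
      refine ⟨Pi.single (0:Fin 7).succ 1, -K - Pi.single (0:Fin 7).succ 1, ?_, ?_, ?_, ?_⟩
      · decide
      · decide
      · decide
      · abel
  · have hset : {p : Finset (Fin 8 → ℤ) | p.card = 2 ∧ (∀ x ∈ p, isNegClass x) ∧
        ∑ x ∈ p, x = -K} = ↑FF' := by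
      ext p
      simp only [FF', Set.mem_setOf_eq, Finset.coe_union, Finset.coe_image, Set.mem_union,
        Set.mem_image, Finset.mem_coe, Finset.coe_filter, Finset.mem_univ, true_and]
      constructor
      · rintro ⟨hc, hneg, hsum⟩
        rcases part3' p hc hneg hsum with ⟨i, hi⟩ | ⟨i, j, hlt, hij⟩
        · exact Or.inl ⟨i, hi.symm⟩
        · exact Or.inr ⟨(i, j), hlt, hij.symm⟩
      · rintro (⟨i, -, rfl⟩ | ⟨⟨i, j⟩, hlt, rfl⟩)
        · exact pA_facts' i
        · exact pB_facts' i j hlt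
    rw [hset, Set.ncard_coe_finset, FF_card']
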